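/- Let R be a commutative ring, A a commutative R-algebra, and B, C commutative A-algebras. Then there is a ring isomorphism (C ⊗_A B) ⊗_R (C ⊗_A B) ≅ (C ⊗_R C) ⊗_{(A ⊗_R A)} (B ⊗_R B), where A ⊗_R A acts on C ⊗_R C and on B ⊗_R B factorwise. -/

import Mathlib

open scoped TensorProduct

namespace Stmt5Aux

variable (R A : Type) [CommRing R] [CommRing A] [Algebra R A]

lemma selfTower (S T : Type) [CommRing S] [CommRing T] [Algebra S T] :
    IsScalarTower S S T :=
  IsScalarTower.of_algebraMap_eq fun _ => rfl

lemma commClass (R S T : Type) [CommRing R] [CommRing S] [CommRing T] [Algebra S T]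
    [Algebra R T] : SMulCommClass S R T :=
  ⟨fun s r x => by simp only [Algebra.smul_def]; rw [mul_left_comm]⟩

@[reducible]
noncomputable def instS (D : Type) [CommRing D] [Algebra R D] [Algebra A D]
    [IsScalarTower R A D] : Algebra (A ⊗[R] A) (D ⊗[R] D) :=
  (Algebra.TensorProduct.map (IsScalarTower.toAlgHom R A D)
    (IsScalarTower.toAlgHom R A D)).toRingHom.toAlgebra

variable {D E : Type} [CommRing D] [Algebra R D] [Algebra A D] [IsScalarTower R A D]
  [CommRing E] [Algebra R E] [Algebra A E] [IsScalarTower R A E]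

noncomputable def mapS (h : D →ₐ[A] E) :
    letI := instS R A D; letI := instS R A E
    (D ⊗[R] D) →ₐ[A ⊗[R] A] (E ⊗[R] E) :=
  letI := instS R A D; letI := instS R A E
  { Algebra.TensorProduct.map (h.restrictScalars R) (h.restrictScalars R) with
    commutes' := fun s => by
      have key : ((Algebra.TensorProduct.map (h.restrictScalars R) (h.restrictScalars R)).comp
          (Algebra.TensorProduct.map (IsScalarTower.toAlgHom R A D)
            (IsScalarTower.toAlgHom R A D)))
          = Algebra.TensorProduct.map (IsScalarTower.toAlgHom R A E)
            (IsScalarTower.toAlgHom R A E) := by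
        rw [← Algebra.TensorProduct.map_comp]
        congr 1 <;> ext a <;> simp
      show (Algebra.TensorProduct.map (h.restrictScalars R) (h.restrictScalars R))
          ((algebraMap (A ⊗[R] A) (D ⊗[R] D)) s) = algebraMap (A ⊗[R] A) (E ⊗[R] E) s
      rw [RingHom.algebraMap_toAlgebra, RingHom.algebraMap_toAlgebra]
      simpa using AlgHom.congr_fun key s }

@[simp] lemma mapS_tmul (h : D →ₐ[A] E) (x y : D) :
    letI := instS R A D; letI := instS R A E
    mapS R A h (x ⊗ₜ y) = h x ⊗ₜ h y := rfl

end Stmt5Aux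

set_option maxHeartbeats 1000000 in
theorem stmt5 (R A B C : Type) [CommRing R] [CommRing A] [CommRing B] [CommRing C]
    [Algebra R A] [Algebra R B] [Algebra R C] [Algebra A B] [Algebra A C]
    [IsScalarTower R A B] [IsScalarTower R A C] :
    letI : Algebra (A ⊗[R] A) (C ⊗[R] C) :=
      (Algebra.TensorProduct.map (IsScalarTower.toAlgHom R A C)
        (IsScalarTower.toAlgHom R A C)).toRingHom.toAlgebra
    letI : Algebra (A ⊗[R] A) (B ⊗[R] B) :=
      (Algebra.TensorProduct.map (IsScalarTower.toAlgHom R A B)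
        (IsScalarTower.toAlgHom R A B)).toRingHom.toAlgebra
    Nonempty (((C ⊗[A] B) ⊗[R] (C ⊗[A] B)) ≃+* ((C ⊗[R] C) ⊗[A ⊗[R] A] (B ⊗[R] B))) := by
  letI iSC := Stmt5Aux.instS R A C
  letI iSB := Stmt5Aux.instS R A B
  letI : Module R (C ⊗[A] B) := Algebra.toModule
  letI iSX := Stmt5Aux.instS R A (C ⊗[A] B)
  letI : SMulCommClass (A ⊗[R] A) R (C ⊗[R] C) := Stmt5Aux.commClass R (A ⊗[R] A) (C ⊗[R] C)
  letI : IsScalarTower (A ⊗[R] A) (A ⊗[R] A) (C ⊗[R] C) :=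
    Stmt5Aux.selfTower (A ⊗[R] A) (C ⊗[R] C)
  letI : IsScalarTower (A ⊗[R] A) (A ⊗[R] A) (B ⊗[R] B) :=
    Stmt5Aux.selfTower (A ⊗[R] A) (B ⊗[R] B)
  letI : IsScalarTower (A ⊗[R] A) (A ⊗[R] A) ((C ⊗[A] B) ⊗[R] (C ⊗[A] B)) :=
    Stmt5Aux.selfTower (A ⊗[R] A) ((C ⊗[A] B) ⊗[R] (C ⊗[A] B))
  letI : IsScalarTower (A ⊗[R] A) (A ⊗[R] A) ((C ⊗[R] C) ⊗[A ⊗[R] A] (B ⊗[R] B)) :=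
    Stmt5Aux.selfTower (A ⊗[R] A) ((C ⊗[R] C) ⊗[A ⊗[R] A] (B ⊗[R] B))
  -- the backward map
  let bwd : ((C ⊗[R] C) ⊗[A ⊗[R] A] (B ⊗[R] B)) →ₐ[A ⊗[R] A]
      ((C ⊗[A] B) ⊗[R] (C ⊗[A] B)) :=
    Algebra.TensorProduct.lift
      (Stmt5Aux.mapS R A (Algebra.TensorProduct.includeLeft : C →ₐ[A] C ⊗[A] B))
      (Stmt5Aux.mapS R A (Algebra.TensorProduct.includeRight : B →ₐ[A] C ⊗[A] B))
      (fun _ _ => Commute.all _ _)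
  have hbwd : ∀ (c c' : C) (b b' : B),
      bwd ((c ⊗ₜ[R] c') ⊗ₜ (b ⊗ₜ[R] b')) = (c ⊗ₜ[A] b) ⊗ₜ[R] (c' ⊗ₜ[A] b') := by
    intro c c' b b'
    simp [bwd, Algebra.TensorProduct.lift_tmul, Algebra.TensorProduct.tmul_mul_tmul]
  -- first component of the forward map
  have p1 : ∃ f : (C ⊗[A] B) →ₐ[R] ((C ⊗[R] C) ⊗[A ⊗[R] A] (B ⊗[R] B)),
      ∀ (c : C) (b : B), f (c ⊗ₜ[A] b) = (c ⊗ₜ[R] (1 : C)) ⊗ₜ (b ⊗ₜ[R] (1 : B)) := by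
    letI iA1 : Algebra A ((C ⊗[R] C) ⊗[A ⊗[R] A] (B ⊗[R] B)) :=
      ((algebraMap (A ⊗[R] A) ((C ⊗[R] C) ⊗[A ⊗[R] A] (B ⊗[R] B))).comp
        (Algebra.TensorProduct.includeLeftRingHom (R := R) (A := A) (B := A))).toAlgebra
    letI : @IsScalarTower A A ((C ⊗[R] C) ⊗[A ⊗[R] A] (B ⊗[R] B)) _ iA1.toSMul iA1.toSMul :=
      Stmt5Aux.selfTower A ((C ⊗[R] C) ⊗[A ⊗[R] A] (B ⊗[R] B))
    letI : @IsScalarTower R A ((C ⊗[R] C) ⊗[A ⊗[R] A] (B ⊗[R] B)) Algebra.toSMul iA1.toSMul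
        Algebra.toSMul :=
      IsScalarTower.of_algebraMap_eq fun r => by
        simp [RingHom.algebraMap_toAlgebra, Algebra.TensorProduct.algebraMap_apply,
          IsScalarTower.algebraMap_apply R A C]
    let cmap : C →ₐ[A] ((C ⊗[R] C) ⊗[A ⊗[R] A] (B ⊗[R] B)) :=
      { toRingHom := (Algebra.TensorProduct.includeLeftRingHom).comp
          (Algebra.TensorProduct.includeLeftRingHom)
        commutes' := fun a => by
          simp [RingHom.algebraMap_toAlgebra, Algebra.TensorProduct.algebraMap_apply] }
    let bmap : B →ₐ[A] ((C ⊗[R] C) ⊗[A ⊗[R] A] (B ⊗[R] B)) :=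
      { toRingHom := (Algebra.TensorProduct.includeRight.toRingHom).comp
          (Algebra.TensorProduct.includeLeftRingHom)
        commutes' := fun a => by
          show (1 : C ⊗[R] C) ⊗ₜ[A ⊗[R] A] ((algebraMap A B a) ⊗ₜ[R] (1 : B))
            = algebraMap A ((C ⊗[R] C) ⊗[A ⊗[R] A] (B ⊗[R] B)) a
          rw [show (algebraMap A B a) ⊗ₜ[R] (1 : B)
              = algebraMap (A ⊗[R] A) (B ⊗[R] B) (a ⊗ₜ[R] 1) from by
            simp [RingHom.algebraMap_toAlgebra]]
          rw [← Algebra.TensorProduct.algebraMap_apply']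
          simp [RingHom.algebraMap_toAlgebra, Algebra.TensorProduct.algebraMap_apply] }
    refine ⟨(Algebra.TensorProduct.lift cmap bmap fun _ _ => Commute.all _ _).restrictScalars R,
      fun c b => ?_⟩
    simp [cmap, bmap, Algebra.TensorProduct.lift_tmul, Algebra.TensorProduct.tmul_mul_tmul]
  -- second component of the forward map
  have p2 : ∃ f : (C ⊗[A] B) →ₐ[R] ((C ⊗[R] C) ⊗[A ⊗[R] A] (B ⊗[R] B)),
      ∀ (c : C) (b : B), f (c ⊗ₜ[A] b) = ((1 : C) ⊗ₜ[R] c) ⊗ₜ ((1 : B) ⊗ₜ[R] b) := by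
    letI iA2 : Algebra A ((C ⊗[R] C) ⊗[A ⊗[R] A] (B ⊗[R] B)) :=
      ((algebraMap (A ⊗[R] A) ((C ⊗[R] C) ⊗[A ⊗[R] A] (B ⊗[R] B))).comp
        ((Algebra.TensorProduct.includeRight : A →ₐ[R] A ⊗[R] A).toRingHom)).toAlgebra
    letI : @IsScalarTower A A ((C ⊗[R] C) ⊗[A ⊗[R] A] (B ⊗[R] B)) _ iA2.toSMul iA2.toSMul :=
      Stmt5Aux.selfTower A ((C ⊗[R] C) ⊗[A ⊗[R] A] (B ⊗[R] B))
    letI : @IsScalarTower R A ((C ⊗[R] C) ⊗[A ⊗[R] A] (B ⊗[R] B)) Algebra.toSMul iA2.toSMul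
        Algebra.toSMul :=
      IsScalarTower.of_algebraMap_eq fun r => by
        simp [RingHom.algebraMap_toAlgebra, Algebra.TensorProduct.algebraMap_apply,
          Algebra.TensorProduct.algebraMap_apply', IsScalarTower.algebraMap_apply R A C]
    let cmap : C →ₐ[A] ((C ⊗[R] C) ⊗[A ⊗[R] A] (B ⊗[R] B)) :=
      { toRingHom := (Algebra.TensorProduct.includeLeftRingHom).comp
          ((Algebra.TensorProduct.includeRight : C →ₐ[R] C ⊗[R] C).toRingHom)
        commutes' := fun a => by
          show ((1 : C) ⊗ₜ[R] (algebraMap A C a)) ⊗ₜ[A ⊗[R] A] (1 : B ⊗[R] B)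
            = algebraMap A ((C ⊗[R] C) ⊗[A ⊗[R] A] (B ⊗[R] B)) a
          rw [show (1 : C) ⊗ₜ[R] (algebraMap A C a)
              = algebraMap (A ⊗[R] A) (C ⊗[R] C) ((1 : A) ⊗ₜ[R] a) from by
            simp [RingHom.algebraMap_toAlgebra]]
          rw [← Algebra.TensorProduct.algebraMap_apply]
          simp [RingHom.algebraMap_toAlgebra] }
    let bmap : B →ₐ[A] ((C ⊗[R] C) ⊗[A ⊗[R] A] (B ⊗[R] B)) :=
      { toRingHom := ((Algebra.TensorProduct.includeRight :
            (B ⊗[R] B) →ₐ[A ⊗[R] A] ((C ⊗[R] C) ⊗[A ⊗[R] A] (B ⊗[R] B))).toRingHom).comp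
          ((Algebra.TensorProduct.includeRight : B →ₐ[R] B ⊗[R] B).toRingHom)
        commutes' := fun a => by
          show (1 : C ⊗[R] C) ⊗ₜ[A ⊗[R] A] ((1 : B) ⊗ₜ[R] (algebraMap A B a))
            = algebraMap A ((C ⊗[R] C) ⊗[A ⊗[R] A] (B ⊗[R] B)) a
          rw [show (1 : B) ⊗ₜ[R] (algebraMap A B a)
              = algebraMap (A ⊗[R] A) (B ⊗[R] B) ((1 : A) ⊗ₜ[R] a) from by
            simp [RingHom.algebraMap_toAlgebra]]
          rw [← Algebra.TensorProduct.algebraMap_apply']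
          simp [RingHom.algebraMap_toAlgebra] }
    refine ⟨(Algebra.TensorProduct.lift cmap bmap fun _ _ => Commute.all _ _).restrictScalars R,
      fun c b => ?_⟩
    simp [cmap, bmap, Algebra.TensorProduct.lift_tmul, Algebra.TensorProduct.tmul_mul_tmul]
  obtain ⟨ψ₁, hψ₁⟩ := p1
  obtain ⟨ψ₂, hψ₂⟩ := p2
  let fwd := Algebra.TensorProduct.lift ψ₁ ψ₂ fun _ _ => Commute.all _ _
  have hfwd : ∀ (c : C) (b : B) (c' : C) (b' : B),
      fwd ((c ⊗ₜ[A] b) ⊗ₜ[R] (c' ⊗ₜ[A] b')) = (c ⊗ₜ[R] c') ⊗ₜ (b ⊗ₜ[R] b') := by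
    intro c b c' b'
    simp [fwd, Algebra.TensorProduct.lift_tmul, hψ₁, hψ₂,
      Algebra.TensorProduct.tmul_mul_tmul]
  have key1 : ∀ x, bwd (fwd x) = x := by
    intro x
    induction x using TensorProduct.induction_on with
    | zero => simp
    | add x y hx hy => simp only [map_add, hx, hy]
    | tmul u v =>
      induction u using TensorProduct.induction_on with
      | zero => simp
      | add x y hx hy => simp only [TensorProduct.add_tmul, map_add, hx, hy]
      | tmul c b =>
        induction v using TensorProduct.induction_on with
        | zero => simp
        | add x y hx hy => simp only [TensorProduct.tmul_add, map_add, hx, hy]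
        | tmul c' b' => rw [hfwd, hbwd]
  have key2 : ∀ y, fwd (bwd y) = y := by
    intro y
    induction y using TensorProduct.induction_on with
    | zero => simp
    | add x y hx hy => simp only [map_add, hx, hy]
    | tmul u v =>
      induction u using TensorProduct.induction_on with
      | zero => simp
      | add x y hx hy => simp only [TensorProduct.add_tmul, map_add, hx, hy]
      | tmul c c' =>
        induction v using TensorProduct.induction_on with
        | zero => simp
        | add x y hx hy => simp only [TensorProduct.tmul_add, map_add, hx, hy]
        | tmul b b' => rw [hbwd, hfwd]
  exact ⟨RingEquiv.mk ⟨fwd, bwd, key1, key2⟩ (map_mul fwd) (map_add fwd)⟩
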